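/- For any graph G of order n ≥ 1 with maximum degree Δ, the L(2,1)-labeling number of the Mycielski graph satisfies max(n+1, 2(Δ+1)) ≤ λ(M(G)) ≤ (n+1) + λ(G). -/

import Mathlib

open SimpleGraph

abbrev MycVert (V : Type) : Type := V ⊕ V ⊕ Unit

def mycAdj {V : Type} (G : SimpleGraph V) : MycVert V → MycVert V → Prop
  | Sum.inl a, Sum.inl b => G.Adj a b
  | Sum.inl a, Sum.inr (Sum.inl b) => G.Adj a b
  | Sum.inr (Sum.inl a), Sum.inl b => G.Adj a b
  | Sum.inr (Sum.inl _), Sum.inr (Sum.inr _) => True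
  | Sum.inr (Sum.inr _), Sum.inr (Sum.inl _) => True
  | _, _ => False

/-- The Mycielski graph of `G`: `Sum.inl v` are original vertices, `Sum.inr (Sum.inl v)`
their copies, and `Sum.inr (Sum.inr ())` is the root. -/
def mycielski {V : Type} (G : SimpleGraph V) : SimpleGraph (MycVert V) where
  Adj := mycAdj G
  symm := by
    refine ⟨?_⟩
    rintro (a | a | a) (b | b | b) h <;>
      first | exact G.adj_symm h | exact G.symm h | trivial | exact h.elim
  loopless := by
    refine ⟨?_⟩
    rintro (a | a | a) h <;> first | exact G.irrefl h | exact G.loopless a h | exact h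

def IterMycVert (V : Type) : ℕ → Type
  | 0 => V
  | t + 1 => MycVert (IterMycVert V t)

/-- The `t`-th iterated Mycielski graph. -/
def iterMycielski {V : Type} (G : SimpleGraph V) : (t : ℕ) → SimpleGraph (IterMycVert V t)
  | 0 => G
  | t + 1 => mycielski (iterMycielski G t)

instance iterMycVertFintype (V : Type) [Fintype V] : (t : ℕ) → Fintype (IterMycVert V t)
  | 0 => inferInstanceAs (Fintype V)
  | t + 1 => letI := iterMycVertFintype V t
             inferInstanceAs (Fintype (MycVert (IterMycVert V t)))

/-- `f` is an `L(2,1)`-labeling of `G`. -/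
def IsL21Labeling {V : Type} (G : SimpleGraph V) (f : V → ℕ) : Prop :=
  (∀ x y, G.Adj x y → 2 ≤ ((f x : ℤ) - (f y : ℤ)).natAbs) ∧
  (∀ x y, G.dist x y = 2 → f x ≠ f y)

/-- The `L(2,1)`-labeling number `λ(G)`: the least `k` such that `G` has an
`L(2,1)`-labeling with labels in `{0, …, k}`. -/
noncomputable def lambdaNumber {V : Type} (G : SimpleGraph V) : ℕ :=
  sInf {k | ∃ f : V → ℕ, IsL21Labeling G f ∧ ∀ v, f v ≤ k}

section helpers
open SimpleGraph
variable {W : Type} {H : SimpleGraph W}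

lemma distEqTwoOf {x y z : W} (hxy : x ≠ y) (hnadj : ¬ H.Adj x y)
    (h1 : H.Adj x z) (h2 : H.Adj z y) : H.dist x y = 2 := by
  have hle : H.dist x y ≤ 2 := by
    simpa using SimpleGraph.dist_le (SimpleGraph.Walk.cons h1 (SimpleGraph.Walk.cons h2 SimpleGraph.Walk.nil))
  have hne0 : H.dist x y ≠ 0 := by
    rw [SimpleGraph.dist_ne_zero_iff_ne_and_reachable]
    exact ⟨hxy, ⟨SimpleGraph.Walk.cons h1 (SimpleGraph.Walk.cons h2 SimpleGraph.Walk.nil)⟩⟩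
  have hne1 : H.dist x y ≠ 1 := fun h => hnadj (SimpleGraph.dist_eq_one_iff_adj.mp h)
  omega

lemma existsMidOfDistTwo {x y : W} (h : H.dist x y = 2) :
    ∃ z, H.Adj x z ∧ H.Adj z y := by
  obtain ⟨p, hp⟩ := SimpleGraph.exists_walk_of_dist_ne_zero (by omega : H.dist x y ≠ 0)
  rw [h] at hp
  refine ⟨p.getVert 1, ?_, ?_⟩
  · simpa using p.adj_getVert_succ (i := 0) (by omega)
  · have h2 := p.adj_getVert_succ (i := 1) (by omega)
    have : p.getVert 2 = y := by
      have := p.getVert_length; rw [hp] at this; exact this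
    rwa [this] at h2

lemma l21_set_nonempty {V : Type} [Fintype V] (G : SimpleGraph V) :
    {k | ∃ f : V → ℕ, IsL21Labeling G f ∧ ∀ v, f v ≤ k}.Nonempty := by
  classical
  refine ⟨2 * Fintype.card V, fun v => 2 * ((Fintype.equivFin V v : ℕ)), ⟨?_, ?_⟩, ?_⟩
  · intro x y hxy
    have hne : ((Fintype.equivFin V) x : ℕ) ≠ ((Fintype.equivFin V) y : ℕ) := by
      intro h
      exact hxy.ne ((Fintype.equivFin V).injective (Fin.val_injective h))
    push_cast
    omega
  · intro x y hd
    have hxy : x ≠ y := by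
      have := SimpleGraph.dist_ne_zero_iff_ne_and_reachable.mp (by omega : G.dist x y ≠ 0)
      exact this.1
    have hne : ((Fintype.equivFin V) x : ℕ) ≠ ((Fintype.equivFin V) y : ℕ) := by
      intro h
      exact hxy ((Fintype.equivFin V).injective (Fin.val_injective h))
    show 2 * ((Fintype.equivFin V) x : ℕ) ≠ 2 * ((Fintype.equivFin V) y : ℕ)
    omega
  · intro v
    have := ((Fintype.equivFin V) v).isLt
    show 2 * ((Fintype.equivFin V) v : ℕ) ≤ 2 * Fintype.card V
    omega

lemma exists_opt_labeling {V : Type} [Fintype V] (G : SimpleGraph V) :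
    ∃ f : V → ℕ, IsL21Labeling G f ∧ ∀ v, f v ≤ lambdaNumber G :=
  Nat.sInf_mem (l21_set_nonempty G)

lemma lambdaNumber_le_of_mem {V : Type} [Fintype V] (G : SimpleGraph V) {k : ℕ}
    (h : ∃ f : V → ℕ, IsL21Labeling G f ∧ ∀ v, f v ≤ k) : lambdaNumber G ≤ k :=
  Nat.sInf_le h

lemma le_lambdaNumber {V : Type} [Fintype V] (G : SimpleGraph V) {b : ℕ}
    (h : ∀ k : ℕ, (∃ f : V → ℕ, IsL21Labeling G f ∧ ∀ v, f v ≤ k) → b ≤ k) :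
    b ≤ lambdaNumber G :=
  le_csInf (l21_set_nonempty G) h

lemma reversal_labeling {W : Type} (H : SimpleGraph W) {f : W → ℕ} {K : ℕ}
    (hL : IsL21Labeling H f) (hbd : ∀ v, f v ≤ K) :
    IsL21Labeling H (fun v => K - f v) ∧ ∀ v, K - f v ≤ K := by
  refine ⟨⟨?_, ?_⟩, fun v => by omega⟩
  · intro x y hA
    have h2 := hL.1 x y hA
    have hx := hbd x; have hy := hbd y
    show 2 ≤ (((K - f x : ℕ) : ℤ) - ((K - f y : ℕ) : ℤ)).natAbs
    omega
  · intro x y hd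
    have h2 := hL.2 x y hd
    have hx := hbd x; have hy := hbd y
    show K - f x ≠ K - f y
    omega

end helpers

section myclemmas
open SimpleGraph
variable {V : Type} {G : SimpleGraph V}

lemma myc_adj_oo {a b : V} : (mycielski G).Adj (Sum.inl a) (Sum.inl b) ↔ G.Adj a b := Iff.rfl
lemma myc_adj_oc {a b : V} : (mycielski G).Adj (Sum.inl a) (Sum.inr (Sum.inl b)) ↔ G.Adj a b := Iff.rfl
lemma myc_adj_co {a b : V} : (mycielski G).Adj (Sum.inr (Sum.inl a)) (Sum.inl b) ↔ G.Adj a b := Iff.rfl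
lemma myc_adj_cu {a : V} {u : Unit} : (mycielski G).Adj (Sum.inr (Sum.inl a)) (Sum.inr (Sum.inr u)) := trivial
lemma myc_adj_uc {a : V} {u : Unit} : (mycielski G).Adj (Sum.inr (Sum.inr u)) (Sum.inr (Sum.inl a)) := trivial
lemma myc_not_adj_ou {a : V} {u : Unit} : ¬ (mycielski G).Adj (Sum.inl a) (Sum.inr (Sum.inr u)) := fun h => h
lemma myc_not_adj_uo {a : V} {u : Unit} : ¬ (mycielski G).Adj (Sum.inr (Sum.inr u)) (Sum.inl a) := fun h => h
lemma myc_not_adj_cc {a b : V} : ¬ (mycielski G).Adj (Sum.inr (Sum.inl a)) (Sum.inr (Sum.inl b)) := fun h => h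
lemma myc_not_adj_uu {u u' : Unit} : ¬ (mycielski G).Adj (Sum.inr (Sum.inr u)) (Sum.inr (Sum.inr u')) := fun h => h

/-- distinct copies are at distance 2 in the Mycielskian -/
lemma myc_dist_cc {a b : V} (h : a ≠ b) :
    (mycielski G).dist (Sum.inr (Sum.inl a)) (Sum.inr (Sum.inl b)) = 2 :=
  distEqTwoOf (by simp [h]) myc_not_adj_cc (myc_adj_cu (u := ())) myc_adj_uc

lemma lower_n [Fintype V] {n : ℕ} (hn : Fintype.card V = n) (h1 : 1 ≤ n) {f : MycVert V → ℕ} {K : ℕ}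
    (hL : IsL21Labeling (mycielski G) f) (hbd : ∀ v, f v ≤ K) : n + 1 ≤ K := by
  classical
  by_contra hlt
  push_neg at hlt
  obtain ⟨hadj, hdist⟩ := hL
  set b := f (Sum.inr (Sum.inr ())) with hb
  have hgap : ∀ w : V, 2 ≤ ((f (Sum.inr (Sum.inl w)) : ℤ) - (b : ℤ)).natAbs :=
    fun w => hadj _ _ (myc_adj_cu (u := ()))
  have hinj : Function.Injective (fun w : V => f (Sum.inr (Sum.inl w))) := by
    intro w1 w2 h
    by_contra hne
    exact hdist _ _ (myc_dist_cc hne) h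
  set A : Finset ℕ := Finset.univ.image (fun w : V => f (Sum.inr (Sum.inl w))) with hA
  have hcard : A.card = n := by
    rw [hA, Finset.card_image_of_injective _ hinj, Finset.card_univ, hn]
  set D : Finset ℕ := {b, if b = 0 then 1 else b - 1} with hD
  have hDcard : D.card = 2 := by
    rw [hD, Finset.card_insert_of_notMem (by split <;> simp <;> omega), Finset.card_singleton]
  have hsub : A ⊆ Finset.range (n + 1) \ D := by
    intro c hc
    rw [hA, Finset.mem_image] at hc
    obtain ⟨w, -, rfl⟩ := hc
    have h2 := hgap w
    have h3 := hbd (Sum.inr (Sum.inl w))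
    rw [Finset.mem_sdiff, Finset.mem_range, hD]
    refine ⟨by omega, ?_⟩
    simp only [Finset.mem_insert, Finset.mem_singleton]
    split <;> omega
  have hDsub : D ⊆ Finset.range (n + 1) := by
    have hbK : b ≤ K := hbd _
    intro c hc
    rw [hD] at hc
    simp only [Finset.mem_insert, Finset.mem_singleton] at hc
    rw [Finset.mem_range]
    rcases hc with rfl | rfl
    · omega
    · split <;> omega
  have := Finset.card_le_card hsub
  rw [Finset.card_sdiff_of_subset hDsub, hcard, Finset.card_range, hDcard] at this
  omega


lemma upper_bound [Fintype V] {n : ℕ} (hn : Fintype.card V = n) (h1 : 1 ≤ n) :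
    lambdaNumber (mycielski G) ≤ (n + 1) + lambdaNumber G := by
  classical
  obtain ⟨f, ⟨hadj, hdist⟩, hbd⟩ := exists_opt_labeling G
  set k := lambdaNumber G with hk
  have hVne : Nonempty V := Fintype.card_pos_iff.mp (by omega)
  obtain ⟨vs, hvs⟩ : ∃ vs : V, ∀ w, f w ≤ f vs := by
    obtain ⟨vs, -, hvs⟩ := Finset.exists_max_image Finset.univ f
      ⟨Classical.arbitrary V, Finset.mem_univ _⟩
    exact ⟨vs, fun w => hvs w (Finset.mem_univ w)⟩
  set e := Fintype.equivFin V with he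
  set h : V → ℕ := fun w => if w = vs then 0 else
      (if (e w : ℕ) < (e vs : ℕ) then (e w : ℕ) + 1 else (e w : ℕ)) with hh
  have hhvs : h vs = 0 := by simp [hh]
  have hhpos : ∀ w, w ≠ vs → 1 ≤ h w := by
    intro w hw
    have : (e w : ℕ) ≠ (e vs : ℕ) := fun hc => hw (e.injective (Fin.val_injective hc))
    simp only [hh, if_neg hw]
    split <;> omega
  have hhle : ∀ w, h w ≤ n - 1 := by
    intro w
    have h1' := (e w).isLt
    have h2' := (e vs).isLt
    simp only [hh]
    split
    · omega
    · split <;> omega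
  have hhinj : ∀ w1 w2 : V, w1 ≠ w2 → h w1 ≠ h w2 := by
    intro w1 w2 hne
    have hev : (e w1 : ℕ) ≠ (e w2 : ℕ) := fun hc => hne (e.injective (Fin.val_injective hc))
    by_cases h1' : w1 = vs
    · subst h1'
      have := hhpos w2 (Ne.symm hne)
      rw [hhvs]; omega
    · by_cases h2' : w2 = vs
      · subst h2'
        have := hhpos w1 hne
        rw [hhvs]; omega
      · have hev1 : (e w1 : ℕ) ≠ (e vs : ℕ) := fun hc => h1' (e.injective (Fin.val_injective hc))
        have hev2 : (e w2 : ℕ) ≠ (e vs : ℕ) := fun hc => h2' (e.injective (Fin.val_injective hc))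
        simp only [hh, if_neg h1', if_neg h2']
        split <;> split <;> omega
  set g : MycVert V → ℕ := fun x => match x with
    | Sum.inl x => f x + 1
    | Sum.inr (Sum.inl w) => k + 2 + h w
    | Sum.inr (Sum.inr _) => 0 with hg
  apply lambdaNumber_le_of_mem
  refine ⟨g, ⟨?_, ?_⟩, ?_⟩
  · -- adjacency condition
    rintro (a | a | a) (c | c | c) hA
    · -- orig orig
      have hA' : G.Adj a c := hA
      have := hadj a c hA'
      show 2 ≤ ((f a + 1 : ℕ) - ((f c + 1 : ℕ) : ℤ)).natAbs
      omega
    · -- orig copy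
      have hA' : G.Adj a c := hA
      show 2 ≤ (((f a + 1 : ℕ) : ℤ) - ((k + 2 + h c : ℕ) : ℤ)).natAbs
      have hfa : f a ≤ k := hbd a
      by_cases hc : c = vs
      · have hg2 := hadj a c hA'
        have h6 : f a ≤ f c := by rw [hc]; exact hvs a
        have h7 : f c ≤ k := hbd c
        have h5 : h c = 0 := by rw [hc]; exact hhvs
        omega
      · have := hhpos c hc
        omega
    · exact hA.elim
    · -- copy orig
      have hA' : G.Adj a c := hA
      show 2 ≤ (((k + 2 + h a : ℕ) : ℤ) - ((f c + 1 : ℕ) : ℤ)).natAbs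
      have hfc : f c ≤ k := hbd c
      by_cases ha : a = vs
      · have hg2 := hadj c a (G.adj_symm hA')
        have h6 : f c ≤ f a := by rw [ha]; exact hvs c
        have h7 : f a ≤ k := hbd a
        have h5 : h a = 0 := by rw [ha]; exact hhvs
        omega
      · have := hhpos a ha
        omega
    · exact hA.elim
    · -- copy u
      show 2 ≤ (((k + 2 + h a : ℕ) : ℤ) - ((0 : ℕ) : ℤ)).natAbs
      omega
    · exact hA.elim
    · -- u copy
      show 2 ≤ (((0 : ℕ) : ℤ) - ((k + 2 + h c : ℕ) : ℤ)).natAbs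
      omega
    · exact hA.elim
  · -- distance-2 condition
    intro x y hd
    have hne : x ≠ y := (SimpleGraph.dist_ne_zero_iff_ne_and_reachable.mp (by rw [hd]; omega)).1
    have hnadj : ¬ (mycielski G).Adj x y := fun hA => by
      rw [SimpleGraph.dist_eq_one_iff_adj.mpr hA] at hd; omega
    obtain ⟨z, hz1, hz2⟩ := existsMidOfDistTwo hd
    match x, y with
    | Sum.inl a, Sum.inl c =>
      have hac : a ≠ c := fun hc => hne (by rw [hc])
      have hnadj' : ¬ G.Adj a c := fun hA => hnadj hA
      have hmid : ∃ z' : V, G.Adj a z' ∧ G.Adj z' c := by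
        match z, hz1, hz2 with
        | Sum.inl zz, hz1, hz2 => exact ⟨zz, hz1, hz2⟩
        | Sum.inr (Sum.inl zz), hz1, hz2 => exact ⟨zz, hz1, hz2⟩
        | Sum.inr (Sum.inr zz), hz1, hz2 => exact hz1.elim
      obtain ⟨z', hza, hzc⟩ := hmid
      have : G.dist a c = 2 := distEqTwoOf hac hnadj' hza hzc
      have := hdist a c this
      show f a + 1 ≠ f c + 1
      omega
    | Sum.inl a, Sum.inr (Sum.inl c) =>
      have := hbd a
      show f a + 1 ≠ k + 2 + h c
      omega
    | Sum.inl a, Sum.inr (Sum.inr c) =>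
      show f a + 1 ≠ 0
      omega
    | Sum.inr (Sum.inl a), Sum.inl c =>
      have := hbd c
      show k + 2 + h a ≠ f c + 1
      omega
    | Sum.inr (Sum.inl a), Sum.inr (Sum.inl c) =>
      have hac : a ≠ c := fun hc => hne (by rw [hc])
      have := hhinj a c hac
      show k + 2 + h a ≠ k + 2 + h c
      omega
    | Sum.inr (Sum.inl a), Sum.inr (Sum.inr c) =>
      show k + 2 + h a ≠ 0
      omega
    | Sum.inr (Sum.inr a), Sum.inl c =>
      show 0 ≠ f c + 1
      omega
    | Sum.inr (Sum.inr a), Sum.inr (Sum.inl c) =>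
      show 0 ≠ k + 2 + h c
      omega
    | Sum.inr (Sum.inr a), Sum.inr (Sum.inr c) =>
      exact absurd (by cases a; cases c; rfl) hne
  · -- bound
    rintro (a | a | a)
    · have := hbd a
      show f a + 1 ≤ (n + 1) + k
      omega
    · have := hhle a
      show k + 2 + h a ≤ (n + 1) + k
      omega
    · show 0 ≤ (n + 1) + k
      omega

lemma myc_nbrs [Fintype V] [DecidableRel G.Adj] (v : V) (f : MycVert V → ℕ)
    (hL : IsL21Labeling (mycielski G) f) :
    ∃ N : Finset (MycVert V), N.card = 2 * G.degree v ∧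
      (∀ x ∈ N, (mycielski G).Adj (Sum.inl v) x) ∧
      (∀ x ∈ N, (∃ w, G.Adj v w ∧ x = Sum.inl w) ∨ (∃ w, G.Adj v w ∧ x = Sum.inr (Sum.inl w))) ∧
      Set.InjOn f ↑N := by
  classical
  set N : Finset (MycVert V) := (G.neighborFinset v).image Sum.inl ∪
      (G.neighborFinset v).image (fun w => Sum.inr (Sum.inl w)) with hN
  have hmem : ∀ x ∈ N, (∃ w, G.Adj v w ∧ x = Sum.inl w) ∨
      (∃ w, G.Adj v w ∧ x = Sum.inr (Sum.inl w)) := by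
    intro x hx
    rw [hN, Finset.mem_union, Finset.mem_image, Finset.mem_image] at hx
    rcases hx with ⟨w, hw, rfl⟩ | ⟨w, hw, rfl⟩
    · exact Or.inl ⟨w, (SimpleGraph.mem_neighborFinset _ _ _).mp hw, rfl⟩
    · exact Or.inr ⟨w, (SimpleGraph.mem_neighborFinset _ _ _).mp hw, rfl⟩
  have hadjN : ∀ x ∈ N, (mycielski G).Adj (Sum.inl v) x := by
    intro x hx
    rcases hmem x hx with ⟨w, hw, rfl⟩ | ⟨w, hw, rfl⟩
    · exact hw
    · exact hw
  refine ⟨N, ?_, hadjN, hmem, ?_⟩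
  · have hdisj : Disjoint ((G.neighborFinset v).image Sum.inl)
        ((G.neighborFinset v).image (fun w => (Sum.inr (Sum.inl w) : MycVert V))) := by
      rw [Finset.disjoint_left]
      rintro a ha hb
      rw [Finset.mem_image] at ha hb
      obtain ⟨w1, -, rfl⟩ := ha
      obtain ⟨w2, -, h⟩ := hb
      exact absurd h (by simp)
    rw [hN, Finset.card_union_of_disjoint hdisj,
      Finset.card_image_of_injective _ Sum.inl_injective,
      Finset.card_image_of_injective _ (fun a b h => by simpa using h : Function.Injective
        (fun w : V => (Sum.inr (Sum.inl w) : MycVert V)))]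
    show G.degree v + G.degree v = 2 * G.degree v
    ring
  · intro x hx y hy hf
    by_contra hne
    by_cases hA : (mycielski G).Adj x y
    · have := hL.1 x y hA
      omega
    · have hd : (mycielski G).dist x y = 2 :=
        distEqTwoOf hne hA ((mycielski G).adj_symm (hadjN x hx)) (hadjN y hy)
      exact hL.2 x y hd hf

lemma deg_tri [Fintype V] [DecidableRel G.Adj] {v : V} {D : ℕ}
    (hdeg : G.degree v = D) (hD : 1 ≤ D) {f : MycVert V → ℕ} {K : ℕ}
    (hL : IsL21Labeling (mycielski G) f) (hbd : ∀ x, f x ≤ K)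
    (hK : K ≤ 2 * D + 1) : f (Sum.inl v) = 0 ∨ f (Sum.inl v) = 2 * D + 1 := by
  classical
  obtain ⟨N, hNcard, hNadj, hNmem, hNinj⟩ := myc_nbrs v f hL
  set A : Finset ℕ := N.image f with hA
  have hAcard : A.card = 2 * D := by
    rw [hA, Finset.card_image_of_injOn hNinj, hNcard, hdeg]
  set a := f (Sum.inl v) with ha
  by_contra hcon
  push_neg at hcon
  have ha1 : 1 ≤ a := by
    rcases Nat.eq_zero_or_pos a with h | h
    · exact absurd h hcon.1
    · exact h
  have ha2 : a ≤ 2 * D := by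
    have := hbd (Sum.inl v)
    have := hcon.2
    omega
  set T : Finset ℕ := {a - 1, a, a + 1} with hT
  have hTcard : T.card = 3 := by
    rw [hT]
    rw [Finset.card_insert_of_notMem (by simp; omega),
      Finset.card_insert_of_notMem (by simp), Finset.card_singleton]
  have hTsub : T ⊆ Finset.range (2 * D + 2) := by
    intro c hc
    rw [hT] at hc
    simp only [Finset.mem_insert, Finset.mem_singleton] at hc
    rw [Finset.mem_range]
    omega
  have hsub : A ⊆ Finset.range (2 * D + 2) \ T := by
    intro c hc
    rw [hA, Finset.mem_image] at hc
    obtain ⟨x, hx, rfl⟩ := hc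
    have hgap := hL.1 (Sum.inl v) x (hNadj x hx)
    rw [← ha] at hgap
    have hb := hbd x
    rw [Finset.mem_sdiff, Finset.mem_range, hT]
    simp only [Finset.mem_insert, Finset.mem_singleton]
    constructor
    · omega
    · push_neg
      omega
  have hle := Finset.card_le_card hsub
  rw [Finset.card_sdiff_of_subset hTsub, Finset.card_range, hTcard, hAcard] at hle
  omega

lemma deg_core [Fintype V] [DecidableRel G.Adj] {v : V} {D : ℕ}
    (hdeg : G.degree v = D) (hD : 1 ≤ D) {f : MycVert V → ℕ} {K : ℕ}
    (hL : IsL21Labeling (mycielski G) f) (hbd : ∀ x, f x ≤ K)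
    (hK : K ≤ 2 * D + 1) (hfv : f (Sum.inl v) = 0) : False := by
  classical
  obtain ⟨N, hNcard, hNadj, hNmem, hNinj⟩ := myc_nbrs v f hL
  set A : Finset ℕ := N.image f with hA
  have hAcard : A.card = 2 * D := by
    rw [hA, Finset.card_image_of_injOn hNinj, hNcard, hdeg]
  have hsub : A ⊆ Finset.range (2 * D + 2) \ {0, 1} := by
    intro c hc
    rw [hA, Finset.mem_image] at hc
    obtain ⟨x, hx, rfl⟩ := hc
    have hgap := hL.1 (Sum.inl v) x (hNadj x hx)
    rw [hfv] at hgap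
    have hb := hbd x
    rw [Finset.mem_sdiff, Finset.mem_range]
    simp only [Finset.mem_insert, Finset.mem_singleton]
    constructor
    · omega
    · push_neg
      omega
  have h01sub : ({0, 1} : Finset ℕ) ⊆ Finset.range (2 * D + 2) := by
    intro c hc
    simp only [Finset.mem_insert, Finset.mem_singleton] at hc
    rw [Finset.mem_range]
    omega
  have hAeq : A = Finset.range (2 * D + 2) \ {0, 1} := by
    apply Finset.eq_of_subset_of_card_le hsub
    rw [Finset.card_sdiff_of_subset h01sub, Finset.card_range, hAcard]
    simp
  have hhit : ∀ c : ℕ, 2 ≤ c → c ≤ 2 * D + 1 → ∃ x ∈ N, f x = c := by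
    intro c hc1 hc2
    have : c ∈ A := by
      rw [hAeq, Finset.mem_sdiff, Finset.mem_range]
      simp only [Finset.mem_insert, Finset.mem_singleton]
      constructor
      · omega
      · push_neg
        omega
    rw [hA, Finset.mem_image] at this
    obtain ⟨x, hx, hfx⟩ := this
    exact ⟨x, hx, hfx⟩
  -- a neighbor of v
  obtain ⟨w0, hw0mem⟩ : ∃ w0, w0 ∈ G.neighborFinset v := by
    apply Finset.card_pos.mp
    have : (G.neighborFinset v).card = D := hdeg
    omega
  have hw0 : G.Adj v w0 := (SimpleGraph.mem_neighborFinset _ _ _).mp hw0mem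
  set u : MycVert V := Sum.inr (Sum.inr ()) with hu
  -- f u ≠ 0
  have hfu0 : f u ≠ 0 := by
    have hd : (mycielski G).dist u (Sum.inl v) = 2 := by
      apply distEqTwoOf (z := Sum.inr (Sum.inl w0)) (by simp [hu]) myc_not_adj_uo
        myc_adj_uc
      exact (G.adj_symm hw0)
    have := hL.2 u (Sum.inl v) hd
    rw [hfv] at this
    exact this
  -- f u differs from all labels in N
  have hfuN : ∀ x ∈ N, f x ≠ f u := by
    intro x hx
    rcases hNmem x hx with ⟨w, hw, rfl⟩ | ⟨w, hw, rfl⟩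
    · have hd : (mycielski G).dist u (Sum.inl w) = 2 := by
        apply distEqTwoOf (z := Sum.inr (Sum.inl v)) (by simp [hu]) myc_not_adj_uo
          myc_adj_uc
        exact hw
      exact fun h => hL.2 u (Sum.inl w) hd h.symm
    · have := hL.1 (Sum.inr (Sum.inl w)) u myc_adj_cu
      omega
  -- f u = 1
  have hfu1 : f u = 1 := by
    by_contra hne
    have h2 : 2 ≤ f u := by omega
    obtain ⟨x, hx, hfx⟩ := hhit (f u) h2 (le_trans (hbd u) hK)
    exact hfuN x hx hfx
  -- the copy of v
  set c := f (Sum.inr (Sum.inl v)) with hc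
  have hc0 : c ≠ 0 := by
    have hd : (mycielski G).dist (Sum.inr (Sum.inl v)) (Sum.inl v) = 2 := by
      apply distEqTwoOf (z := Sum.inl w0) (by simp) ?_ ?_ ?_
      · exact fun h => (G.irrefl (myc_adj_co.mp h))
      · exact hw0
      · exact G.adj_symm hw0
    have := hL.2 _ _ hd
    rw [hfv] at this
    exact this
  have hcgap : 2 ≤ ((c : ℤ) - (f u : ℤ)).natAbs := hL.1 _ u myc_adj_cu
  have hc3 : 3 ≤ c := by rw [hfu1] at hcgap; omega
  obtain ⟨x, hx, hfx⟩ := hhit c (by omega) (le_trans (hbd _) hK)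
  rcases hNmem x hx with ⟨w, hw, rfl⟩ | ⟨w, hw, rfl⟩
  · have := hL.1 (Sum.inr (Sum.inl v)) (Sum.inl w) hw
    rw [← hc, hfx] at this
    omega
  · have hvw : v ≠ w := G.ne_of_adj hw
    have hd := myc_dist_cc (G := G) hvw
    exact hL.2 _ _ hd (by rw [← hc, hfx])

lemma lower_deg [Fintype V] [DecidableRel G.Adj] {n : ℕ} (hn : Fintype.card V = n)
    (h1 : 1 ≤ n) {f : MycVert V → ℕ} {K : ℕ}
    (hL : IsL21Labeling (mycielski G) f) (hbd : ∀ x, f x ≤ K) :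
    2 * (G.maxDegree + 1) ≤ K := by
  classical
  by_cases hD : G.maxDegree = 0
  · rw [hD]
    have := lower_n hn h1 hL hbd
    omega
  · have hVne : Nonempty V := Fintype.card_pos_iff.mp (by omega)
    obtain ⟨v, hv⟩ := G.exists_maximal_degree_vertex
    set D := G.maxDegree with hDdef
    have hdeg : G.degree v = D := hv.symm
    have hD1 : 1 ≤ D := by omega
    by_contra hlt
    push_neg at hlt
    have hK : K ≤ 2 * D + 1 := by omega
    rcases deg_tri hdeg hD1 hL hbd hK with h0 | htop
    · exact deg_core hdeg hD1 hL hbd hK h0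
    · -- reverse the labeling
      obtain ⟨hL', hbd'⟩ := reversal_labeling (mycielski G) hL hbd
      have hKeq : K = 2 * D + 1 := by
        have := hbd (Sum.inl v)
        omega
      have hfv' : (fun x => K - f x) (Sum.inl v) = 0 := by
        simp only
        omega
      exact deg_core hdeg hD1 hL' hbd' hK hfv'

end myclemmas

open scoped Classical in
/-- For any graph `G` of order `n ≥ 1` with maximum degree `Δ`,
`max (n+1) (2*(Δ+1)) ≤ λ(M(G)) ≤ (n+1) + λ(G)`. -/
theorem lambdaNumber_mycielski_bounds {V : Type} [Fintype V] (G : SimpleGraph V) (n : ℕ)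
    (hn : Fintype.card V = n) (h1 : 1 ≤ n) :
    max (n + 1) (2 * (G.maxDegree + 1)) ≤ lambdaNumber (mycielski G) ∧
    lambdaNumber (mycielski G) ≤ (n + 1) + lambdaNumber G := by
  constructor
  · apply max_le
    · exact le_lambdaNumber (mycielski G) (fun K ⟨f, hL, hbd⟩ => lower_n hn h1 hL hbd)
    · exact le_lambdaNumber (mycielski G) (fun K ⟨f, hL, hbd⟩ => lower_deg hn h1 hL hbd)
  · exact upper_bound hn h1
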